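/- Let $K$ satisfy $K(x,y) \ge c_1(x^{\gamma+\lambda} y^{-\lambda} + y^{\gamma+\lambda} x^{-\lambda})$ with $c_1 > 0$, and let $f$ be a nonnegative Radon measure on $(0,\infty)$ such that for all $z > 0$, $\iint_{\{0 < x \le z,\ y > z-x\}} K(x,y)\, x\, f(dx)\, f(dy) \le J$ for some $J > 0$. Then there is a constant $C > 0$ depending only on $\gamma$, $\lambda$, $c_1$ such that $\frac{1}{z}\int_{[z/2,z]} f(dx) \le C\sqrt{J}\, z^{-(\gamma+3)/2}$ for all $z > 0$. -/
import Mathlib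


open MeasureTheory Set

/-- For `t ∈ [2/3, 1]` and any real exponent `a`, `(2/3)^|a| ≤ t^a`. -/
lemma rpow_aux_lb {t a : ℝ} (h1 : 2/3 ≤ t) (h2 : t ≤ 1) :
    (2/3 : ℝ) ^ |a| ≤ t ^ a := by
  have ht : (0:ℝ) < t := lt_of_lt_of_le (by norm_num) h1
  rcases le_or_gt 0 a with ha | ha
  · rw [abs_of_nonneg ha]
    exact Real.rpow_le_rpow (by norm_num) h1 ha
  · rw [abs_of_neg ha]
    have h1' : t ^ a ≥ 1 := by
      have := Real.rpow_le_rpow_of_exponent_ge ht h2 (le_of_lt ha : a ≤ 0)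
      simpa [Real.rpow_zero] using this
    have h2' : (2/3 : ℝ) ^ (-a) ≤ 1 := by
      have := Real.rpow_le_rpow_of_exponent_ge (by norm_num : (0:ℝ) < 2/3)
        (by norm_num : (2/3:ℝ) ≤ 1) (by linarith : (0:ℝ) ≤ -a)
      simpa [Real.rpow_zero] using this
    linarith

/-- Key step: the flux bound on the square `[2w/3, w]²` controls `f (Icc (2w/3) w)`. -/
lemma key_step (γ lam c1 : ℝ) (hc1 : 0 < c1)
    (K : ℝ → ℝ → ℝ) (f : Measure ℝ) [IsLocallyFiniteMeasure f] (J : ℝ)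
    (hJ : 0 < J)
    (hK : ∀ x y : ℝ, 0 < x → 0 < y →
      c1 * (x ^ (γ + lam) * y ^ (-lam) + y ^ (γ + lam) * x ^ (-lam)) ≤ K x y)
    (hflux : ∀ z : ℝ, 0 < z →
      (∫⁻ p : ℝ × ℝ in {p : ℝ × ℝ | 0 < p.1 ∧ p.1 ≤ z ∧ z - p.1 < p.2},
        ENNReal.ofReal (K p.1 p.2 * p.1) ∂(f.prod f)) ≤ ENNReal.ofReal J)
    (w : ℝ) (hw : 0 < w) :
    f (Set.Icc (2*w/3) w) ≤
      ENNReal.ofReal (Real.sqrt (J / (c1 * ((2/3:ℝ) ^ |γ + lam + 1| * (2/3:ℝ) ^ |lam|)))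
        * w ^ (-(γ+1)/2)) := by
  set c0 : ℝ := (2/3:ℝ) ^ |γ + lam + 1| * (2/3:ℝ) ^ |lam| with hc0def
  have hc0 : 0 < c0 := mul_pos (Real.rpow_pos_of_pos (by norm_num) _)
    (Real.rpow_pos_of_pos (by norm_num) _)
  set A : Set ℝ := Set.Icc (2*w/3) w with hA
  set m : ℝ := c1 * c0 * w ^ (γ + 1) with hm
  have hmpos : 0 < m := mul_pos (mul_pos hc1 hc0) (Real.rpow_pos_of_pos hw _)
  -- pointwise lower bound on the square
  have hpt : ∀ x ∈ A, ∀ y ∈ A, m ≤ K x y * x := by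
    intro x hx y hy
    have hx0 : 0 < x := lt_of_lt_of_le (by linarith : (0:ℝ) < 2*w/3) hx.1
    have hy0 : 0 < y := lt_of_lt_of_le (by linarith : (0:ℝ) < 2*w/3) hy.1
    have hKb := hK x y hx0 hy0
    have hterm2 : 0 ≤ y ^ (γ + lam) * x ^ (-lam) :=
      mul_nonneg (Real.rpow_pos_of_pos hy0 _).le (Real.rpow_pos_of_pos hx0 _).le
    have h1 : c1 * (x ^ (γ + lam) * y ^ (-lam)) ≤ K x y := by nlinarith
    -- x^(γ+lam) * x = x^(γ+lam+1)
    have hxx : x ^ (γ + lam) * x = x ^ (γ + lam + 1) :=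
      (Real.rpow_add_one hx0.ne' (γ + lam)).symm
    -- lower bounds via rpow_aux_lb applied to t = x/w, y/w
    have htx : (2/3:ℝ) ≤ x / w ∧ x / w ≤ 1 := by
      constructor
      · rw [le_div_iff₀ hw]; linarith [hx.1]
      · rw [div_le_one hw]; exact hx.2
    have hty : (2/3:ℝ) ≤ y / w ∧ y / w ≤ 1 := by
      constructor
      · rw [le_div_iff₀ hw]; linarith [hy.1]
      · rw [div_le_one hw]; exact hy.2
    have hxa : (2/3:ℝ) ^ |γ + lam + 1| * w ^ (γ + lam + 1) ≤ x ^ (γ + lam + 1) := by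
      have := rpow_aux_lb (a := γ + lam + 1) htx.1 htx.2
      have hd : (x / w) ^ (γ + lam + 1) = x ^ (γ + lam + 1) / w ^ (γ + lam + 1) :=
        Real.div_rpow hx0.le hw.le _
      rw [hd] at this
      have hwp : 0 < w ^ (γ + lam + 1) := Real.rpow_pos_of_pos hw _
      calc (2/3:ℝ) ^ |γ + lam + 1| * w ^ (γ + lam + 1)
          ≤ (x ^ (γ + lam + 1) / w ^ (γ + lam + 1)) * w ^ (γ + lam + 1) :=
            mul_le_mul_of_nonneg_right this hwp.le
        _ = x ^ (γ + lam + 1) := by field_simp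
    have hya : (2/3:ℝ) ^ |lam| * w ^ (-lam) ≤ y ^ (-lam) := by
      have := rpow_aux_lb (a := -lam) hty.1 hty.2
      have hd : (y / w) ^ (-lam) = y ^ (-lam) / w ^ (-lam) :=
        Real.div_rpow hy0.le hw.le _
      rw [hd, abs_neg] at this
      have hwp : 0 < w ^ (-lam) := Real.rpow_pos_of_pos hw _
      calc (2/3:ℝ) ^ |lam| * w ^ (-lam)
          ≤ (y ^ (-lam) / w ^ (-lam)) * w ^ (-lam) :=
            mul_le_mul_of_nonneg_right this hwp.le
        _ = y ^ (-lam) := by field_simp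
    have hwprod : w ^ (γ + lam + 1) * w ^ (-lam) = w ^ (γ + 1) := by
      rw [← Real.rpow_add hw]; congr 1; ring
    have hstep : m ≤ c1 * (x ^ (γ + lam + 1) * y ^ (-lam)) := by
      rw [hm, hc0def]
      have h1' : 0 ≤ (2/3:ℝ) ^ |γ + lam + 1| := (Real.rpow_pos_of_pos (by norm_num) _).le
      have h2' : 0 ≤ (2/3:ℝ) ^ |lam| := (Real.rpow_pos_of_pos (by norm_num) _).le
      have hwp1 : 0 < w ^ (γ + lam + 1) := Real.rpow_pos_of_pos hw _
      have hwp2 : 0 < w ^ (-lam) := Real.rpow_pos_of_pos hw _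
      have : ((2/3:ℝ) ^ |γ + lam + 1| * w ^ (γ + lam + 1)) * ((2/3:ℝ) ^ |lam| * w ^ (-lam))
          ≤ x ^ (γ + lam + 1) * y ^ (-lam) := by
        apply mul_le_mul hxa hya (by positivity) (by positivity)
      calc c1 * ((2/3:ℝ) ^ |γ + lam + 1| * (2/3:ℝ) ^ |lam|) * w ^ (γ + 1)
          = c1 * (((2/3:ℝ) ^ |γ + lam + 1| * w ^ (γ + lam + 1)) *
              ((2/3:ℝ) ^ |lam| * w ^ (-lam))) := by rw [← hwprod]; ring
        _ ≤ c1 * (x ^ (γ + lam + 1) * y ^ (-lam)) :=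
            mul_le_mul_of_nonneg_left this hc1.le
    have hfin : c1 * (x ^ (γ + lam + 1) * y ^ (-lam)) ≤ K x y * x := by
      have : c1 * (x ^ (γ + lam) * y ^ (-lam)) * x ≤ K x y * x :=
        mul_le_mul_of_nonneg_right h1 hx0.le
      calc c1 * (x ^ (γ + lam + 1) * y ^ (-lam))
          = c1 * (x ^ (γ + lam) * y ^ (-lam)) * x := by rw [← hxx]; ring
        _ ≤ K x y * x := this
    linarith
  -- the square is contained in the flux region for z = w
  have hsub : A ×ˢ A ⊆ {p : ℝ × ℝ | 0 < p.1 ∧ p.1 ≤ w ∧ w - p.1 < p.2} := by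
    rintro ⟨x, y⟩ ⟨hx, hy⟩
    refine ⟨lt_of_lt_of_le (by linarith : (0:ℝ) < 2*w/3) hx.1, hx.2, ?_⟩
    have : w - x ≤ w/3 := by linarith [hx.1]
    calc w - x ≤ w/3 := this
      _ < 2*w/3 := by linarith
      _ ≤ y := hy.1
  have hAmeas : MeasurableSet (A ×ˢ A) :=
    (measurableSet_Icc).prod measurableSet_Icc
  -- lower bound for the restricted integral
  have hlow : ENNReal.ofReal m * ((f A) * (f A)) ≤ ENNReal.ofReal J := by
    have h1 : ∫⁻ _ in A ×ˢ A, ENNReal.ofReal m ∂(f.prod f)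
        = ENNReal.ofReal m * (f.prod f) (A ×ˢ A) := setLIntegral_const _ _
    have h2 : (f.prod f) (A ×ˢ A) = f A * f A := Measure.prod_prod A A
    have h3 : ∫⁻ p in A ×ˢ A, ENNReal.ofReal m ∂(f.prod f) ≤
        ∫⁻ p in A ×ˢ A, ENNReal.ofReal (K p.1 p.2 * p.1) ∂(f.prod f) := by
      apply setLIntegral_mono' hAmeas
      rintro ⟨x, y⟩ ⟨hx, hy⟩
      exact ENNReal.ofReal_le_ofReal (hpt x hx y hy)
    have h4 : ∫⁻ p in A ×ˢ A, ENNReal.ofReal (K p.1 p.2 * p.1) ∂(f.prod f) ≤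
        ∫⁻ p in {p : ℝ × ℝ | 0 < p.1 ∧ p.1 ≤ w ∧ w - p.1 < p.2},
          ENNReal.ofReal (K p.1 p.2 * p.1) ∂(f.prod f) :=
      lintegral_mono' (Measure.restrict_mono hsub le_rfl) le_rfl
    calc ENNReal.ofReal m * ((f A) * (f A)) = ENNReal.ofReal m * (f.prod f) (A ×ˢ A) := by
          rw [h2]
      _ = ∫⁻ _ in A ×ˢ A, ENNReal.ofReal m ∂(f.prod f) := h1.symm
      _ ≤ ∫⁻ p in A ×ˢ A, ENNReal.ofReal (K p.1 p.2 * p.1) ∂(f.prod f) := h3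
      _ ≤ _ := h4
      _ ≤ ENNReal.ofReal J := hflux w hw
  -- f A is finite
  have hAfin : f A < ⊤ := (isCompact_Icc).measure_lt_top
  set a : ℝ := (f A).toReal with ha
  have ha0 : 0 ≤ a := ENNReal.toReal_nonneg
  have hreal : m * (a * a) ≤ J := by
    have hLHS : (ENNReal.ofReal m * ((f A) * (f A))).toReal = m * (a * a) := by
      rw [ENNReal.toReal_mul, ENNReal.toReal_mul, ENNReal.toReal_ofReal hmpos.le]
    have := ENNReal.toReal_mono (by simp) hlow
    rw [hLHS, ENNReal.toReal_ofReal hJ.le] at this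
    exact this
  have hsq : a ≤ Real.sqrt (J / m) := by
    rw [show Real.sqrt (J / m) = Real.sqrt (J/m) from rfl]
    have : a^2 ≤ J / m := by
      rw [le_div_iff₀ hmpos]; nlinarith
    calc a = Real.sqrt (a^2) := (Real.sqrt_sq ha0).symm
      _ ≤ Real.sqrt (J/m) := Real.sqrt_le_sqrt this
  -- rewrite sqrt (J/m)
  have hrw : Real.sqrt (J / m) = Real.sqrt (J / (c1 * c0)) * w ^ (-(γ+1)/2) := by
    have h1 : J / m = (J / (c1 * c0)) * w ^ (-(γ+1)) := by
      rw [hm, Real.rpow_neg hw.le]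
      field_simp
    rw [h1, Real.sqrt_mul (by positivity)]
    congr 1
    rw [Real.sqrt_eq_rpow, ← Real.rpow_mul hw.le]
    congr 1
    ring
  have := hsq
  rw [hrw] at this
  calc f A = ENNReal.ofReal a := (ENNReal.ofReal_toReal hAfin.ne).symm
    _ ≤ ENNReal.ofReal (Real.sqrt (J / (c1 * c0)) * w ^ (-(γ+1)/2)) :=
        ENNReal.ofReal_le_ofReal this

theorem stmt_14 (γ lam c1 : ℝ) (hc1 : 0 < c1) :
    ∃ C : ℝ, 0 < C ∧
      ∀ (K : ℝ → ℝ → ℝ) (f : Measure ℝ) [IsLocallyFiniteMeasure f] (J : ℝ),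
        0 < J →
        (∀ x y : ℝ, 0 < x → 0 < y →
          c1 * (x ^ (γ + lam) * y ^ (-lam) + y ^ (γ + lam) * x ^ (-lam)) ≤ K x y) →
        (∀ z : ℝ, 0 < z →
          (∫⁻ p : ℝ × ℝ in {p : ℝ × ℝ | 0 < p.1 ∧ p.1 ≤ z ∧ z - p.1 < p.2},
            ENNReal.ofReal (K p.1 p.2 * p.1) ∂(f.prod f)) ≤ ENNReal.ofReal J) →
        ∀ z : ℝ, 0 < z →
          f (Set.Icc (z / 2) z) ≤
            ENNReal.ofReal (C * Real.sqrt J * z ^ (-(γ + 3) / 2) * z) := by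
  set c0 : ℝ := (2/3:ℝ) ^ |γ + lam + 1| * (2/3:ℝ) ^ |lam| with hc0def
  have hc0 : 0 < c0 := mul_pos (Real.rpow_pos_of_pos (by norm_num) _)
    (Real.rpow_pos_of_pos (by norm_num) _)
  refine ⟨Real.sqrt (1 / (c1 * c0)) * ((3/4:ℝ) ^ (-(γ+1)/2) + 1), ?_, ?_⟩
  · have : 0 < Real.sqrt (1 / (c1 * c0)) := Real.sqrt_pos.2 (by positivity)
    have : (0:ℝ) < (3/4:ℝ) ^ (-(γ+1)/2) := Real.rpow_pos_of_pos (by norm_num) _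
    positivity
  · intro K f _ J hJ hK hflux z hz
    have h1 := key_step γ lam c1 hc1 K f J hJ hK hflux (3*z/4) (by linarith)
    have h2 := key_step γ lam c1 hc1 K f J hJ hK hflux z hz
    have he1 : (2*(3*z/4)/3 : ℝ) = z/2 := by ring
    rw [he1] at h1
    have hcover : Set.Icc (z/2) z ⊆ Set.Icc (z/2) (3*z/4) ∪ Set.Icc (2*z/3) z := by
      intro t ht
      rcases le_or_gt t (3*z/4) with h | h
      · exact Or.inl ⟨ht.1, h⟩
      · exact Or.inr ⟨by linarith, ht.2⟩
    have hmeas : f (Set.Icc (z/2) z) ≤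
        f (Set.Icc (z/2) (3*z/4)) + f (Set.Icc (2*z/3) z) :=
      le_trans (measure_mono hcover) (measure_union_le _ _)
    have hsum : f (Set.Icc (z/2) (3*z/4)) + f (Set.Icc (2*z/3) z) ≤
        ENNReal.ofReal (Real.sqrt (J / (c1 * c0)) * (3*z/4) ^ (-(γ+1)/2))
        + ENNReal.ofReal (Real.sqrt (J / (c1 * c0)) * z ^ (-(γ+1)/2)) :=
      add_le_add h1 h2
    have hEadd : ENNReal.ofReal (Real.sqrt (J / (c1 * c0)) * (3*z/4) ^ (-(γ+1)/2))
        + ENNReal.ofReal (Real.sqrt (J / (c1 * c0)) * z ^ (-(γ+1)/2))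
        = ENNReal.ofReal (Real.sqrt (J / (c1 * c0)) * (3*z/4) ^ (-(γ+1)/2)
          + Real.sqrt (J / (c1 * c0)) * z ^ (-(γ+1)/2)) := by
      rw [ENNReal.ofReal_add (by positivity) (by positivity)]
    have hfinal : Real.sqrt (J / (c1 * c0)) * (3*z/4) ^ (-(γ+1)/2)
          + Real.sqrt (J / (c1 * c0)) * z ^ (-(γ+1)/2)
        ≤ Real.sqrt (1 / (c1 * c0)) * ((3/4:ℝ) ^ (-(γ+1)/2) + 1) * Real.sqrt J
          * z ^ (-(γ + 3) / 2) * z := by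
      have hzz : z ^ (-(γ + 3) / 2) * z = z ^ (-(γ+1)/2) := by
        rw [← Real.rpow_add_one hz.ne' (-(γ + 3) / 2)]
        congr 1; ring
      have hsplit : (3*z/4 : ℝ) ^ (-(γ+1)/2) = (3/4:ℝ) ^ (-(γ+1)/2) * z ^ (-(γ+1)/2) := by
        rw [show (3*z/4 : ℝ) = (3/4) * z by ring, Real.mul_rpow (by norm_num) hz.le]
      have hsqrtJ : Real.sqrt (J / (c1 * c0)) = Real.sqrt J * Real.sqrt (1 / (c1 * c0)) := by
        rw [show J / (c1 * c0) = J * (1 / (c1 * c0)) by ring, Real.sqrt_mul hJ.le]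
      refine le_of_eq ?_
      rw [hsplit, hsqrtJ,
        show Real.sqrt (1 / (c1 * c0)) * ((3/4:ℝ) ^ (-(γ+1)/2) + 1) * Real.sqrt J
          * z ^ (-(γ + 3) / 2) * z
        = Real.sqrt (1 / (c1 * c0)) * ((3/4:ℝ) ^ (-(γ+1)/2) + 1) * Real.sqrt J
          * (z ^ (-(γ + 3) / 2) * z) from by ring, hzz]
      ring
    calc f (Set.Icc (z/2) z) ≤ _ := hmeas
      _ ≤ _ := hsum
      _ = _ := hEadd
      _ ≤ ENNReal.ofReal (Real.sqrt (1 / (c1 * c0)) * ((3/4:ℝ) ^ (-(γ+1)/2) + 1)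
            * Real.sqrt J * z ^ (-(γ + 3) / 2) * z) := ENNReal.ofReal_le_ofReal hfinal
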